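/- Fix an integer N ≥ 1 and parameters A = (a₃, a₅, …, a_{2N−1}) ∈ ℂ^{N−1}. If every parameter a_{2k+1} (1 ≤ k ≤ N−1) is purely imaginary, then the N-th order lump satisfies the space–time reflection symmetry u_N(x, y, t; A) = u_N(−x, y, −t; A) for all (x,y,t) ∈ ℝ³. -/

import Mathlib

open Complex

/-- Schur polynomials `S_k(v)` of a sequence `v` (entries indexed from 1), defined by the
generating identity `Σ_{k≥0} S_k(v) λ^k = exp(Σ_{j≥1} v_j λ^j)` (equivalently, by
`S_0 = 1` together with the recursion `k S_k = Σ_{j=1}^{k} j v_j S_{k−j}` obtained by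
differentiating the generating identity). -/
noncomputable def schurPoly (v : ℕ → ℂ) : ℕ → ℂ
  | 0 => 1
  | k + 1 =>
      ((k : ℂ) + 1)⁻¹ *
        ∑ j ∈ Finset.range (k + 1), ((j : ℂ) + 1) * v (j + 1) * schurPoly v (k - j)
  decreasing_by exact Nat.lt_succ_of_le (Nat.sub_le k j)

/-- The sequence `s = (s₁, s₂, …)` defined by `Σ_{j≥1} s_j λ^j = log((2/λ) tanh(λ/2))`:
`s_j` is the `j`-th Taylor coefficient at `0` of `λ ↦ log((2/λ) tanh(λ/2))` (the
function being extended by its removable-singularity value `1` inside the logarithm). -/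
noncomputable def sSeq (j : ℕ) : ℂ :=
  iteratedDeriv j
    (fun l : ℂ => Complex.log (if l = 0 then 1 else (2 / l) * Complex.tanh (l / 2))) 0
    / (j.factorial : ℂ)

/-- The sequence `x⁺(n)`:  first entry `x + 3t + 2iy + n`, odd entries
`x⁺_{2k+1} = (x + 2^{2k+1} i y + 3^{2k+1} t)/(2k+1)! + a_{2k+1}` (the parameter
`a_{2k+1}` is `a k`), and even entries zero. -/
noncomputable def xPlus (a : ℕ → ℂ) (n : ℕ) (x y t : ℝ) (j : ℕ) : ℂ :=
  if j = 1 then (x : ℂ) + 3 * (t : ℂ) + 2 * I * (y : ℂ) + (n : ℂ)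
  else if j % 2 = 1 then
    ((x : ℂ) + 2 ^ j * I * (y : ℂ) + 3 ^ j * (t : ℂ)) / (j.factorial : ℂ) + a ((j - 1) / 2)
  else 0

/-- The sequence `x⁻(n)`:  first entry `x + 3t − 2iy − n`, odd entries
`x⁻_{2k+1} = (x − 2^{2k+1} i y + 3^{2k+1} t)/(2k+1)! + conj(a_{2k+1})`, and even
entries zero. -/
noncomputable def xMinus (a : ℕ → ℂ) (n : ℕ) (x y t : ℝ) (j : ℕ) : ℂ :=
  if j = 1 then (x : ℂ) + 3 * (t : ℂ) - 2 * I * (y : ℂ) - (n : ℂ)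
  else if j % 2 = 1 then
    ((x : ℂ) - 2 ^ j * I * (y : ℂ) + 3 ^ j * (t : ℂ)) / (j.factorial : ℂ)
      + starRingEnd ℂ (a ((j - 1) / 2))
  else 0

/-- `τ^{(n)}_{i,j} = (−1)^n Σ_{ν=0}^{min(i,j)} 4^{−ν} S_{i−ν}(x⁺(n)+νs) S_{j−ν}(x⁻(n)+νs)`. -/
noncomputable def tauLump (a : ℕ → ℂ) (n : ℕ) (x y t : ℝ) (i j : ℕ) : ℂ :=
  (-1 : ℂ) ^ n *
    ∑ ν ∈ Finset.range (min i j + 1),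
      ((4 : ℂ) ^ ν)⁻¹
        * schurPoly (fun l => xPlus a n x y t l + (ν : ℂ) * sSeq l) (i - ν)
        * schurPoly (fun l => xMinus a n x y t l + (ν : ℂ) * sSeq l) (j - ν)

/-- `σ_n(x,y,t;A) = det_{1≤i,j≤N}(τ^{(n)}_{2i−1,2j−1})`. -/
noncomputable def sigmaLump (N : ℕ) (a : ℕ → ℂ) (n : ℕ) (x y t : ℝ) : ℂ :=
  (Matrix.of fun i j : Fin N =>
    tauLump a n x y t (2 * (i : ℕ) + 1) (2 * (j : ℕ) + 1)).det

/-- The `N`-th order lump `u_N(x,y,t;A) = |σ₁/σ₀|² − 1`. -/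
noncomputable def uLump (N : ℕ) (a : ℕ → ℂ) (x y t : ℝ) : ℝ :=
  ‖sigmaLump N a 1 x y t / sigmaLump N a 0 x y t‖ ^ 2 - 1



lemma sSeq_odd (j : ℕ) (hj : j % 2 = 1) : sSeq j = 0 := by
  set g : ℂ → ℂ := fun l : ℂ => Complex.log (if l = 0 then 1 else (2 / l) * Complex.tanh (l / 2)) with hg
  have heven : (fun l : ℂ => g (-l)) = g := by
    funext l
    by_cases h : l = 0
    · simp [g, h]
    · have h' : -l ≠ 0 := neg_ne_zero.mpr h
      simp only [g, if_neg h, if_neg h']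
      rw [show (-l/2 : ℂ) = -(l/2) by ring, Complex.tanh_neg]
      congr 1
      field_simp
  have := iteratedDeriv_comp_neg j g 0
  rw [heven, neg_zero] at this
  have hsign : ((-1 : ℂ) ^ j) = -1 := Odd.neg_one_pow (Nat.odd_iff.mpr hj)
  rw [hsign] at this
  have h2 : iteratedDeriv j g 0 = -iteratedDeriv j g 0 := by
    simpa using this
  have h0 : iteratedDeriv j g 0 = 0 := by have := eq_neg_iff_add_eq_zero.mp h2; linear_combination this / 2
  simp [sSeq, ← hg, h0]


lemma schurPoly_neg (v : ℕ → ℂ) (k : ℕ) :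
    schurPoly (fun j => (-1 : ℂ) ^ j * v j) k = (-1 : ℂ) ^ k * schurPoly v k := by
  induction k using Nat.strong_induction_on with
  | _ k ih =>
    match k with
    | 0 => simp [schurPoly]
    | k + 1 =>
      rw [schurPoly, schurPoly, Finset.mul_sum, Finset.mul_sum,
        mul_comm ((-1:ℂ)^(k+1)), Finset.sum_mul]
      apply Finset.sum_congr rfl
      intro j hj
      rw [Finset.mem_range] at hj
      rw [ih (k - j) (Nat.lt_succ_of_le (Nat.sub_le k j))]
      have hs : (-1:ℂ)^(j+1) * (-1:ℂ)^(k-j) = (-1:ℂ)^(k+1) := by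
        rw [← pow_add]; congr 1; omega
      calc (↑k + 1)⁻¹ * ((↑j + 1) * ((-1:ℂ) ^ (j + 1) * v (j + 1)) * ((-1:ℂ) ^ (k - j) * schurPoly v (k - j)))
          = (↑k + 1)⁻¹ * ((↑j + 1) * v (j + 1) * schurPoly v (k - j)) * ((-1:ℂ)^(j+1) * (-1:ℂ)^(k-j)) := by ring
        _ = (↑k + 1)⁻¹ * ((↑j + 1) * v (j + 1) * schurPoly v (k - j)) * (-1:ℂ) ^ (k + 1) := by rw [hs]

section
variable (a : ℕ → ℂ) (n : ℕ) (x y t : ℝ)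

lemma xPlus_neg (hconj : ∀ k, 1 ≤ k → starRingEnd ℂ (a k) = -(a k)) (j : ℕ) :
    xPlus a n (-x) y (-t) j = (-1 : ℂ) ^ j * xMinus a n x y t j := by
  unfold xPlus xMinus
  by_cases h1 : j = 1
  · subst h1; simp only [if_pos rfl]; push_cast; ring
  · rw [if_neg h1, if_neg h1]
    by_cases h2 : j % 2 = 1
    · rw [if_pos h2, if_pos h2]
      have hj3 : 3 ≤ j := by omega
      have hk : 1 ≤ (j - 1) / 2 := by omega
      rw [hconj _ hk]
      have hodd : (-1 : ℂ) ^ j = -1 := Odd.neg_one_pow (Nat.odd_iff.mpr h2)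
      rw [hodd]; push_cast; ring
    · rw [if_neg h2, if_neg h2, mul_zero]

lemma xMinus_neg (hconj : ∀ k, 1 ≤ k → starRingEnd ℂ (a k) = -(a k)) (j : ℕ) :
    xMinus a n (-x) y (-t) j = (-1 : ℂ) ^ j * xPlus a n x y t j := by
  unfold xPlus xMinus
  by_cases h1 : j = 1
  · subst h1; simp only [if_pos rfl]; push_cast; ring
  · rw [if_neg h1, if_neg h1]
    by_cases h2 : j % 2 = 1
    · rw [if_pos h2, if_pos h2]
      have hj3 : 3 ≤ j := by omega
      have hk : 1 ≤ (j - 1) / 2 := by omega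
      rw [hconj _ hk]
      have hodd : (-1 : ℂ) ^ j = -1 := Odd.neg_one_pow (Nat.odd_iff.mpr h2)
      rw [hodd]; push_cast; ring
    · rw [if_neg h2, if_neg h2, mul_zero]

lemma vPlus_neg (hconj : ∀ k, 1 ≤ k → starRingEnd ℂ (a k) = -(a k)) (ν : ℕ) :
    (fun l => xPlus a n (-x) y (-t) l + (ν : ℂ) * sSeq l)
      = fun l => (-1 : ℂ) ^ l * (xMinus a n x y t l + (ν : ℂ) * sSeq l) := by
  funext l
  rw [xPlus_neg a n x y t hconj]
  by_cases h : l % 2 = 1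
  · rw [sSeq_odd l h]; ring
  · have : (-1 : ℂ) ^ l = 1 := Even.neg_one_pow (Nat.even_iff.mpr (by omega))
    rw [this]; ring

lemma vMinus_neg (hconj : ∀ k, 1 ≤ k → starRingEnd ℂ (a k) = -(a k)) (ν : ℕ) :
    (fun l => xMinus a n (-x) y (-t) l + (ν : ℂ) * sSeq l)
      = fun l => (-1 : ℂ) ^ l * (xPlus a n x y t l + (ν : ℂ) * sSeq l) := by
  funext l
  rw [xMinus_neg a n x y t hconj]
  by_cases h : l % 2 = 1
  · rw [sSeq_odd l h]; ring
  · have : (-1 : ℂ) ^ l = 1 := Even.neg_one_pow (Nat.even_iff.mpr (by omega))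
    rw [this]; ring

lemma tau_neg (hconj : ∀ k, 1 ≤ k → starRingEnd ℂ (a k) = -(a k)) (i j : ℕ) :
    tauLump a n (-x) y (-t) i j = (-1 : ℂ) ^ (i + j) * tauLump a n x y t j i := by
  unfold tauLump
  rw [min_comm j i]
  have hterm : ∀ ν ∈ Finset.range (min i j + 1),
      ((4:ℂ)^ν)⁻¹ * schurPoly (fun l => xPlus a n (-x) y (-t) l + (ν:ℂ) * sSeq l) (i - ν)
        * schurPoly (fun l => xMinus a n (-x) y (-t) l + (ν:ℂ) * sSeq l) (j - ν)
      = (((4:ℂ)^ν)⁻¹ * schurPoly (fun l => xPlus a n x y t l + (ν:ℂ) * sSeq l) (j - ν)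
        * schurPoly (fun l => xMinus a n x y t l + (ν:ℂ) * sSeq l) (i - ν)) * (-1:ℂ)^(i+j) := by
    intro ν hν
    rw [Finset.mem_range] at hν
    have hνi : ν ≤ i := le_trans (by omega) (min_le_left i j)
    have hνj : ν ≤ j := le_trans (by omega) (min_le_right i j)
    rw [vPlus_neg a n x y t hconj, vMinus_neg a n x y t hconj, schurPoly_neg, schurPoly_neg]
    have hs : (-1 : ℂ) ^ (i - ν) * (-1 : ℂ) ^ (j - ν) = (-1 : ℂ) ^ (i + j) := by
      rw [← pow_add]
      have h2 : (i - ν) + (j - ν) + 2 * ν = i + j := by omega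
      calc (-1 : ℂ) ^ (i - ν + (j - ν)) = (-1:ℂ) ^ (i - ν + (j - ν)) * ((-1:ℂ)^2)^ν := by norm_num
        _ = (-1:ℂ) ^ (i - ν + (j - ν) + 2 * ν) := by rw [← pow_mul, ← pow_add]
        _ = _ := by rw [h2]
    rw [← hs]
    ring
  rw [Finset.sum_congr rfl hterm, ← Finset.sum_mul]
  ring

lemma sigma_neg (hconj : ∀ k, 1 ≤ k → starRingEnd ℂ (a k) = -(a k)) (N : ℕ) : sigmaLump N a n (-x) y (-t) = sigmaLump N a n x y t := by
  unfold sigmaLump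
  rw [← Matrix.det_transpose (Matrix.of fun i j : Fin N =>
    tauLump a n x y t (2 * (i : ℕ) + 1) (2 * (j : ℕ) + 1))]
  congr 1
  ext i j
  rw [Matrix.transpose_apply, Matrix.of_apply, Matrix.of_apply,
    tau_neg a n x y t hconj]
  have : (-1 : ℂ) ^ (2 * (i : ℕ) + 1 + (2 * (j : ℕ) + 1)) = 1 := by
    rw [show 2 * (i : ℕ) + 1 + (2 * (j : ℕ) + 1) = 2 * ((i:ℕ) + (j:ℕ) + 1) by ring,
      pow_mul]
    norm_num
  rw [this, one_mul]

end


/-- The first-order lump profile `L(X,Y)`. -/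
noncomputable def lumpProfile (X Y : ℝ) : ℝ :=
  (-32 * X ^ 2 + 128 * Y ^ 2 + 8) / ((4 * X ^ 2 + 16 * Y ^ 2 + 1) ^ 2)

/-- if all parameters `a_{2k+1}` (`1 ≤ k ≤ N−1`) are purely imaginary,
then the `N`-th order lump satisfies the space–time reflection symmetry
`u_N(x, y, t; A) = u_N(−x, y, −t; A)`. -/
theorem lump_reflection_symmetry (N : ℕ) (hN : 1 ≤ N) (a : ℕ → ℂ)
    (ha : ∀ k, N ≤ k → a k = 0)
    (haIm : ∀ k, 1 ≤ k → k ≤ N - 1 → (a k).re = 0) :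
    ∀ x y t : ℝ, uLump N a x y t = uLump N a (-x) y (-t) := by
  intro x y t
  have hconj : ∀ k, 1 ≤ k → starRingEnd ℂ (a k) = -(a k) := by
    intro k hk
    have hre : (a k).re = 0 := by
      by_cases h : k ≤ N - 1
      · exact haIm k hk h
      · rw [ha k (by omega)]; simp
    simp [Complex.ext_iff, hre]
  unfold uLump
  rw [sigma_neg a 0 x y t hconj N, sigma_neg a 1 x y t hconj N]
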